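/- Let ⊙ be a non-degenerate pseudo-multiplication on [0,∞] and let φ denote the supremum of the set of ⊙-finite elements. If a σ-maxitive measure τ on a measurable space (E, 𝔅) has the Radon–Nikodym property with respect to the idempotent ⊙-integral, then τ(E) ≤ φ. -/

import Mathlib

open scoped ENNReal
open Set

/-- A pseudo-multiplication on `[0,∞]`: associative, monotone in each argument,
continuous on `(0,∞) × [0,∞]`, with `s ↦ s ⊙ t` continuous on `(0,∞]`,
admitting a left identity, without zero divisors, and with `0` as annihilator. -/
structure PseudoMul where
  op : ℝ≥0∞ → ℝ≥0∞ → ℝ≥0∞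
  assoc : ∀ a b c, op (op a b) c = op a (op b c)
  mono_left : ∀ t, Monotone fun s => op s t
  mono_right : ∀ s, Monotone fun t => op s t
  continuousOn : ContinuousOn (fun p : ℝ≥0∞ × ℝ≥0∞ => op p.1 p.2) (Ioo 0 ⊤ ×ˢ univ)
  continuousOn_left : ∀ t, ContinuousOn (fun s => op s t) (Ioi 0)
  one : ℝ≥0∞
  one_op : ∀ t, op one t = t
  no_zero_divisors : ∀ s t, op s t = 0 → s = 0 ∨ t = 0
  zero_op : ∀ t, op 0 t = 0
  op_zero : ∀ t, op t 0 = 0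

/-- An element `t` is `⊙`-finite if `⨅_{s>0} s ⊙ t = 0`. -/
def PseudoMul.OFinite (P : PseudoMul) (t : ℝ≥0∞) : Prop :=
  ⨅ s ∈ Ioi (0 : ℝ≥0∞), P.op s t = 0

/-- `⊙` is non-degenerate if its left identity is `⊙`-finite. -/
def PseudoMul.Nondegenerate (P : PseudoMul) : Prop :=
  P.OFinite P.one

/-- A σ-maxitive measure: vanishes on `∅` and turns countable unions of
measurable sets into suprema. -/
def SigmaMaxitive {E : Type*} [MeasurableSpace E] (ν : Set E → ℝ≥0∞) : Prop :=
  ν ∅ = 0 ∧ ∀ B : ℕ → Set E, (∀ n, MeasurableSet (B n)) →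
    ν (⋃ n, B n) = ⨆ n, ν (B n)

/-- The idempotent `⊙`-integral `∫_B f ⊙ dν = ⨆_{t ∈ [0,∞)} t ⊙ ν(B ∩ {f > t})`. -/
noncomputable def idemInt {E : Type*} [MeasurableSpace E] (P : PseudoMul) (ν : Set E → ℝ≥0∞)
    (f : E → ℝ≥0∞) (B : Set E) : ℝ≥0∞ :=
  ⨆ t ∈ Iio (⊤ : ℝ≥0∞), P.op t (ν (B ∩ {x | t < f x}))

/-- `ν ≪⊙ τ`: `ν(B) ≤ ∞ ⊙ τ(B)` whenever `τ(B)` is `⊙`-finite. -/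
def OAbsCont {E : Type*} [MeasurableSpace E] (P : PseudoMul)
    (ν τ : Set E → ℝ≥0∞) : Prop :=
  ∀ B : Set E, MeasurableSet B → P.OFinite (τ B) → ν B ≤ P.op ⊤ (τ B)

/-- `τ` is σ-`⊙`-finite. -/
def SigmaOFinite {E : Type*} [MeasurableSpace E] (P : PseudoMul)
    (τ : Set E → ℝ≥0∞) : Prop :=
  ∃ B : ℕ → Set E, (∀ n, MeasurableSet (B n)) ∧ (⋃ n, B n) = univ ∧
    ∀ n, P.OFinite (τ (B n))

/-- A σ-ideal of the σ-algebra: a nonempty collection of measurable sets closed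
under countable unions and under measurable subsets. -/
def IsSigmaIdeal {E : Type*} [MeasurableSpace E] (I : Set (Set E)) : Prop :=
  I.Nonempty ∧ (∀ A ∈ I, MeasurableSet A) ∧
    (∀ B : ℕ → Set E, (∀ n, B n ∈ I) → (⋃ n, B n) ∈ I) ∧
    (∀ A B : Set E, B ∈ I → A ⊆ B → MeasurableSet A → A ∈ I)

/-- `τ` is σ-principal. -/
def SigmaPrincipal {E : Type*} [MeasurableSpace E] (τ : Set E → ℝ≥0∞) : Prop :=
  ∀ I : Set (Set E), IsSigmaIdeal I → ∃ L ∈ I, ∀ S ∈ I, τ (S \ L) = 0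

/-- `τ` has the Radon–Nikodym property w.r.t. the idempotent `⊙`-integral. -/
def HasRNP {E : Type*} [MeasurableSpace E] (P : PseudoMul)
    (τ : Set E → ℝ≥0∞) : Prop :=
  ∀ ν : Set E → ℝ≥0∞, SigmaMaxitive ν → OAbsCont P ν τ →
    ∃ c : E → ℝ≥0∞, Measurable c ∧
      ∀ B : Set E, MeasurableSet B → ν B = idemInt P τ c B


/-- Downward closure of `⊙`-finiteness. -/
lemma PseudoMul.OFinite.mono (P : PseudoMul) {x y : ℝ≥0∞} (h : y ≤ x)
    (hx : P.OFinite x) : P.OFinite y := by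
  unfold PseudoMul.OFinite at *
  refine le_antisymm ?_ (zero_le)
  calc ⨅ s ∈ Ioi (0 : ℝ≥0∞), P.op s y ≤ ⨅ s ∈ Ioi (0 : ℝ≥0∞), P.op s x :=
        iInf₂_mono fun s _ => P.mono_right s h
    _ = 0 := hx

/-- If `x` is not `⊙`-finite and `t ≠ 0`, then `t ⊙ x` is not `⊙`-finite. -/
lemma PseudoMul.not_oFinite_op (P : PseudoMul) {x t : ℝ≥0∞} (ht : t ≠ 0)
    (hx : ¬ P.OFinite x) : ¬ P.OFinite (P.op t x) := by
  intro h
  apply hx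
  unfold PseudoMul.OFinite at *
  refine le_antisymm ?_ (zero_le)
  calc ⨅ s ∈ Ioi (0 : ℝ≥0∞), P.op s x
      ≤ ⨅ s ∈ Ioi (0 : ℝ≥0∞), P.op s (P.op t x) := by
        refine le_iInf₂ fun s hs => ?_
        rw [← P.assoc]
        have hst : P.op s t ∈ Ioi (0 : ℝ≥0∞) := by
          rcases eq_or_ne (P.op s t) 0 with h0 | h0
          · rcases P.no_zero_divisors s t h0 with rfl | rfl
            · exact absurd (mem_Ioi.mp hs) (lt_irrefl 0)
            · exact absurd rfl ht
          · exact lt_of_le_of_ne (zero_le) (Ne.symm h0)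
        exact biInf_le (fun u => P.op u x) hst
    _ = 0 := h

/-- If `τ` has the Radon–Nikodym property, then `τ(E)` is at most the supremum
`φ` of the set of `⊙`-finite elements. -/
theorem measure_univ_le_phi_of_rnp {E : Type*} [MeasurableSpace E]
    (P : PseudoMul) (hP : P.Nondegenerate)
    (τ : Set E → ℝ≥0∞) (hτ : SigmaMaxitive τ) (hRNP : HasRNP P τ) :
    τ univ ≤ sSup {t : ℝ≥0∞ | P.OFinite t} := by
  classical
  by_contra hcon
  push_neg at hcon
  set S : Set ℝ≥0∞ := {t : ℝ≥0∞ | P.OFinite t} with hS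
  set φ : ℝ≥0∞ := sSup S with hphi
  have hone_ne : P.one ≠ 0 := by
    intro h
    have h1 := P.one_op 1
    rw [h, P.zero_op] at h1
    exact one_ne_zero h1.symm
  have hnotfin : ∀ {x : ℝ≥0∞}, φ < x → ¬ P.OFinite x := by
    intro x hx hfx
    have hxS : x ∈ S := hfx
    exact absurd (le_sSup hxS) (not_le.mpr hx)
  -- the two-valued maxitive measure ν
  set ν : Set E → ℝ≥0∞ := fun B => if τ B ≤ φ then 0 else P.one with hν
  have hνle : ∀ B, ν B ≤ P.one := by
    intro B; by_cases h : τ B ≤ φ <;> simp [hν, h]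
  have hνmax : SigmaMaxitive ν := by
    constructor
    · have : τ (∅ : Set E) ≤ φ := by rw [hτ.1]; exact zero_le
      simp [hν, this]
    · intro B hB
      have hU : τ (⋃ n, B n) = ⨆ n, τ (B n) := hτ.2 B hB
      by_cases h : ∀ n, τ (B n) ≤ φ
      · have hle : τ (⋃ n, B n) ≤ φ := by rw [hU]; exact iSup_le h
        have h0 : ∀ n, ν (B n) = 0 := fun n => if_pos (h n)
        have h1 : ν (⋃ n, B n) = 0 := if_pos hle
        have h2 : (⨆ n, ν (B n)) = 0 := by simp [h0]
        rw [h1, h2]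
      · push_neg at h
        obtain ⟨n, hn⟩ := h
        have hgt : ¬ τ (⋃ n, B n) ≤ φ := by
          rw [hU]; exact not_le.mpr (lt_of_lt_of_le hn (le_iSup (fun m => τ (B m)) n))
        have h1 : ν (⋃ n, B n) = P.one := if_neg hgt
        have h2 : ν (B n) = P.one := if_neg (not_le.mpr hn)
        refine le_antisymm ?_ ?_
        · rw [h1, ← h2]
          exact le_iSup (fun m => ν (B m)) n
        · rw [h1]
          exact iSup_le fun m => hνle (B m)
  have hνac : OAbsCont P ν τ := by
    intro B _ hfin
    have : τ B ≤ φ := le_sSup hfin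
    simp [hν, this]
  obtain ⟨c, hc, hint⟩ := hRNP ν hνmax hνac
  -- decompose univ
  set B : ℕ → Set E := fun n => if n = 0 then {x | c x = 0}
    else {x | ((n : ℝ≥0∞))⁻¹ < c x} with hB
  have hBmeas : ∀ n, MeasurableSet (B n) := by
    intro n
    rcases eq_or_ne n 0 with rfl | hn
    · have hB0 : B 0 = c ⁻¹' {0} := by ext x; simp [hB]
      rw [hB0]
      exact hc (measurableSet_singleton 0)
    · simp only [hB, if_neg hn]
      exact hc measurableSet_Ioi
  have hBunion : (⋃ n, B n) = univ := by
    ext x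
    simp only [mem_iUnion, mem_univ, iff_true]
    rcases eq_or_ne (c x) 0 with h0 | h0
    · exact ⟨0, by simp [hB, h0]⟩
    · obtain ⟨n, hn⟩ := ENNReal.exists_inv_nat_lt h0
      have hn0 : n ≠ 0 := by
        intro h; rw [h] at hn; simp at hn
      exact ⟨n, by simp [hB, if_neg hn0]; exact hn⟩
  have hU : τ univ = ⨆ n, τ (B n) := by
    rw [← hBunion]; exact hτ.2 B hBmeas
  have : φ < ⨆ n, τ (B n) := by rw [← hU]; exact hcon
  obtain ⟨n, hn⟩ := lt_iSup_iff.mp this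
  have hνBn : ν (B n) = P.one := if_neg (not_le.mpr hn)
  have hintn := hint (B n) (hBmeas n)
  rcases eq_or_ne n 0 with rfl | hn0
  · -- case c = 0 on B 0
    have hempty : ∀ t : ℝ≥0∞, B 0 ∩ {x | t < c x} = ∅ := by
      intro t
      ext x
      simp only [hB, if_pos rfl, mem_inter_iff, mem_setOf_eq, mem_empty_iff_false,
        iff_false, not_and]
      intro h0 hlt
      rw [h0] at hlt
      exact (not_lt_of_ge (zero_le : (0:ℝ≥0∞) ≤ t)) hlt
    have : idemInt P τ c (B 0) = 0 := by
      unfold idemInt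
      refine le_antisymm ?_ (zero_le)
      refine iSup₂_le fun t _ => ?_
      rw [hempty t, hτ.1, P.op_zero]
    rw [hνBn, this] at hintn
    exact hone_ne hintn
  · -- case B n = {x | (n : ℝ≥0∞)⁻¹ < c x}
    set t0 : ℝ≥0∞ := ((n : ℝ≥0∞))⁻¹ with ht0
    have ht0ne : t0 ≠ 0 := by
      simp [ht0, ENNReal.inv_ne_zero]
    have ht0top : t0 < ⊤ := by
      rw [ht0]
      exact ENNReal.inv_lt_top.mpr (by exact_mod_cast Nat.pos_of_ne_zero hn0)
    have hBn : B n = {x | t0 < c x} := by simp [hB, if_neg hn0, ht0]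
    have hsub : B n ∩ {x | t0 < c x} = B n := by
      rw [hBn, inter_self]
    have hle1 : P.op t0 (τ (B n)) ≤ P.one := by
      calc P.op t0 (τ (B n)) = P.op t0 (τ (B n ∩ {x | t0 < c x})) := by rw [hsub]
        _ ≤ idemInt P τ c (B n) := by
            unfold idemInt
            exact le_biSup (fun t => P.op t (τ (B n ∩ {x | t < c x}))) ht0top
        _ = ν (B n) := (hintn).symm
        _ ≤ P.one := hνle (B n)
    have hOF : P.OFinite (P.op t0 (τ (B n))) := PseudoMul.OFinite.mono P hle1 hP
    exact P.not_oFinite_op ht0ne (hnotfin hn) hOF
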